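/- Let 𝔤₁, 𝔤₂ be ℤ-graded Lie algebras over ℂ, i.e. 𝔤ᵢ = ⊕_{n∈ℤ} 𝔤ᵢ(n) with [𝔤ᵢ(m), 𝔤ᵢ(n)] ⊆ 𝔤ᵢ(m+n). For i = 1, 2 let Mᵢ be a 𝔤ᵢ-module with a ℤ-grading Mᵢ = ⊕_{k∈ℤ} Mᵢ(k) that is compatible with the action (𝔤ᵢ(n)·Mᵢ(k) ⊆ Mᵢ(n+k)) and bounded above (there is Kᵢ with Mᵢ(k) = 0 for all k > Kᵢ). Assume M₁ and M₂ are simple and that every 𝔤ᵢ-module endomorphism of Mᵢ is multiplication by a scalar. Let D ⊆ 𝔤₁ × 𝔤₂ be a Lie subalgebra of the product Lie algebra such that: for every x ∈ 𝔤₁ and every N ∈ ℤ there exists y ∈ ⊕_{n ≥ N} 𝔤₂(n) with (x,y) ∈ D, and for every y ∈ 𝔤₂ and every N ∈ ℤ there exists x ∈ ⊕_{n ≥ N} 𝔤₁(n) with (x,y) ∈ D. Then M₁ ⊗ M₂, with the action (x,y)·(m⊗w) = (x·m)⊗w + m⊗(y·w), is a simple D-module. -/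

import Mathlib

open TensorProduct

attribute [local instance 100] LieRing.ofAssociativeRing

/-- The product of two Lie rings, with componentwise bracket. -/
instance prodLieRing (L₁ L₂ : Type*) [LieRing L₁] [LieRing L₂] : LieRing (L₁ × L₂) where
  bracket x y := (⁅x.1, y.1⁆, ⁅x.2, y.2⁆)
  add_lie x y z := by simp [add_lie]
  lie_add x y z := by simp [lie_add]
  lie_self x := by simp
  leibniz_lie x y z := by
    show ((⁅x.1, ⁅y.1, z.1⁆⁆ : L₁), (⁅x.2, ⁅y.2, z.2⁆⁆ : L₂)) =
      ((⁅⁅x.1, y.1⁆, z.1⁆, ⁅⁅x.2, y.2⁆, z.2⁆) : L₁ × L₂) +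
      ((⁅y.1, ⁅x.1, z.1⁆⁆, ⁅y.2, ⁅x.2, z.2⁆⁆) : L₁ × L₂)
    rw [Prod.mk_add_mk]
    exact Prod.ext (leibniz_lie _ _ _) (leibniz_lie _ _ _)

/-- The product of two Lie algebras, with componentwise bracket. -/
instance prodLieAlgebra (R : Type*) [CommRing R] (L₁ L₂ : Type*) [LieRing L₁] [LieRing L₂]
    [LieAlgebra R L₁] [LieAlgebra R L₂] : LieAlgebra R (L₁ × L₂) where
  lie_smul t x y := by
    show ((⁅x.1, t • y.1⁆ : L₁), (⁅x.2, t • y.2⁆ : L₂)) = t • ((⁅x.1, y.1⁆, ⁅x.2, y.2⁆) : L₁ × L₂)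
    rw [Prod.smul_mk]
    exact Prod.ext (lie_smul _ _ _) (lie_smul _ _ _)

/-- Let `𝔤₁, 𝔤₂` be ℤ-graded complex Lie algebras and `M₁, M₂` simple
ℤ-graded modules over them with gradings compatible with the action and bounded above,
and with all `𝔤ᵢ`-endomorphisms of `Mᵢ` scalar.  Let `D ⊆ 𝔤₁ × 𝔤₂` be a Lie subalgebra
such that every `x ∈ 𝔤₁` has, for every `N`, a partner `y ∈ ⊕_{n ≥ N} 𝔤₂(n)` with
`(x,y) ∈ D`, and symmetrically.  Then `M₁ ⊗ M₂`, with the action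
`(x,y)·(m⊗w) = (x·m)⊗w + m⊗(y·w)`, is a simple `D`-module. -/
theorem tensor_product_simple_over_subalgebra_graded
    (𝔤₁ 𝔤₂ : Type*) [LieRing 𝔤₁] [LieAlgebra ℂ 𝔤₁] [LieRing 𝔤₂] [LieAlgebra ℂ 𝔤₂]
    (M₁ M₂ : Type*)
    [AddCommGroup M₁] [Module ℂ M₁] [LieRingModule 𝔤₁ M₁] [LieModule ℂ 𝔤₁ M₁]
    [AddCommGroup M₂] [Module ℂ M₂] [LieRingModule 𝔤₂ M₂] [LieModule ℂ 𝔤₂ M₂]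
    -- ℤ-gradings of the Lie algebras
    (G₁ : ℤ → Submodule ℂ 𝔤₁) (G₂ : ℤ → Submodule ℂ 𝔤₂)
    (hG₁ : DirectSum.IsInternal G₁) (hG₂ : DirectSum.IsInternal G₂)
    (hG₁lie : ∀ (m n : ℤ), ∀ x ∈ G₁ m, ∀ y ∈ G₁ n, ⁅x, y⁆ ∈ G₁ (m + n))
    (hG₂lie : ∀ (m n : ℤ), ∀ x ∈ G₂ m, ∀ y ∈ G₂ n, ⁅x, y⁆ ∈ G₂ (m + n))
    -- compatible ℤ-gradings of the modules, bounded above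
    (W₁ : ℤ → Submodule ℂ M₁) (W₂ : ℤ → Submodule ℂ M₂)
    (hW₁ : DirectSum.IsInternal W₁) (hW₂ : DirectSum.IsInternal W₂)
    (hW₁compat : ∀ (n k : ℤ), ∀ x ∈ G₁ n, ∀ m ∈ W₁ k, ⁅x, m⁆ ∈ W₁ (n + k))
    (hW₂compat : ∀ (n k : ℤ), ∀ y ∈ G₂ n, ∀ w ∈ W₂ k, ⁅y, w⁆ ∈ W₂ (n + k))
    (hW₁bdd : ∃ K₁ : ℤ, ∀ k : ℤ, K₁ < k → W₁ k = ⊥)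
    (hW₂bdd : ∃ K₂ : ℤ, ∀ k : ℤ, K₂ < k → W₂ k = ⊥)
    -- `M₁` and `M₂` are simple, with scalar endomorphisms
    (hM₁simple : IsSimpleOrder (LieSubmodule ℂ 𝔤₁ M₁))
    (hM₂simple : IsSimpleOrder (LieSubmodule ℂ 𝔤₂ M₂))
    (hSchur₁ : ∀ f : M₁ →ₗ[ℂ] M₁, (∀ (x : 𝔤₁) (m : M₁), f ⁅x, m⁆ = ⁅x, f m⁆) →
      ∃ c : ℂ, ∀ m : M₁, f m = c • m)
    (hSchur₂ : ∀ f : M₂ →ₗ[ℂ] M₂, (∀ (y : 𝔤₂) (w : M₂), f ⁅y, w⁆ = ⁅y, f w⁆) →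
      ∃ c : ℂ, ∀ w : M₂, f w = c • w)
    -- the subalgebra `D` of the product Lie algebra
    (D : LieSubalgebra ℂ (𝔤₁ × 𝔤₂))
    (hD₁ : ∀ (x : 𝔤₁) (N : ℤ), ∃ y : 𝔤₂, y ∈ (⨆ n : ℤ, ⨆ _ : N ≤ n, G₂ n) ∧ (x, y) ∈ D)
    (hD₂ : ∀ (y : 𝔤₂) (N : ℤ), ∃ x : 𝔤₁, x ∈ (⨆ n : ℤ, ⨆ _ : N ≤ n, G₁ n) ∧ (x, y) ∈ D)
    -- the action of `𝔤₁ × 𝔤₂` on `M₁ ⊗ M₂`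
    (ρ : (𝔤₁ × 𝔤₂) →ₗ⁅ℂ⁆ Module.End ℂ (M₁ ⊗[ℂ] M₂))
    (hρ : ∀ (x : 𝔤₁) (y : 𝔤₂) (m : M₁) (w : M₂),
      ρ (x, y) (m ⊗ₜ[ℂ] w) = ⁅x, m⁆ ⊗ₜ[ℂ] w + m ⊗ₜ[ℂ] ⁅y, w⁆) :
    -- `M₁ ⊗ M₂` is a simple `D`-module
    ∀ N : Submodule ℂ (M₁ ⊗[ℂ] M₂),
      (∀ d ∈ D, ∀ v ∈ N, ρ d v ∈ N) → N = ⊥ ∨ N = ⊤ := by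
  classical
  intro N hN
  by_cases hbot : N = ⊥
  · exact Or.inl hbot
  right
  obtain ⟨K₁, hK₁⟩ := hW₁bdd
  obtain ⟨K₂, hK₂⟩ := hW₂bdd
  -- basic facts about the action
  have hρ₁ : ∀ (x : 𝔤₁) (m : M₁) (w : M₂),
      ρ (x, (0 : 𝔤₂)) (m ⊗ₜ[ℂ] w) = ⁅x, m⁆ ⊗ₜ[ℂ] w := by
    intro x m w; rw [hρ]; simp
  have hρ₂ : ∀ (y : 𝔤₂) (m : M₁) (w : M₂),
      ρ ((0 : 𝔤₁), y) (m ⊗ₜ[ℂ] w) = m ⊗ₜ[ℂ] ⁅y, w⁆ := by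
    intro y m w; rw [hρ]; simp
  have hsplit : ∀ (x : 𝔤₁) (y : 𝔤₂) (v : M₁ ⊗[ℂ] M₂),
      ρ (x, y) v = ρ (x, (0:𝔤₂)) v + ρ ((0:𝔤₁), y) v := by
    intro x y v
    have h : (x, y) = (x, (0:𝔤₂)) + ((0:𝔤₁), y) := by simp
    rw [h, map_add ρ, LinearMap.add_apply]
  -- linear maps "act on one side"
  have hlin₂ : ∀ v : M₁ ⊗[ℂ] M₂, ∃ L : 𝔤₂ →ₗ[ℂ] M₁ ⊗[ℂ] M₂,
      ∀ y : 𝔤₂, L y = ρ ((0:𝔤₁), y) v := by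
    intro v
    refine ⟨{ toFun := fun y => ρ ((0:𝔤₁), y) v
              map_add' := fun a b => ?_
              map_smul' := fun c a => ?_ }, fun y => rfl⟩
    · show ρ ((0:𝔤₁), a + b) v = ρ ((0:𝔤₁), a) v + ρ ((0:𝔤₁), b) v
      have h : ((0:𝔤₁), a + b) = ((0:𝔤₁), a) + ((0:𝔤₁), b) := by simp
      rw [h, map_add ρ, LinearMap.add_apply]
    · show ρ ((0:𝔤₁), c • a) v = c • ρ ((0:𝔤₁), a) v
      have h : ((0:𝔤₁), c • a) = c • ((0:𝔤₁), a) := by simp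
      rw [h, map_smul ρ, LinearMap.smul_apply]
  have hlin₁ : ∀ v : M₁ ⊗[ℂ] M₂, ∃ L : 𝔤₁ →ₗ[ℂ] M₁ ⊗[ℂ] M₂,
      ∀ x : 𝔤₁, L x = ρ (x, (0:𝔤₂)) v := by
    intro v
    refine ⟨{ toFun := fun x => ρ (x, (0:𝔤₂)) v
              map_add' := fun a b => ?_
              map_smul' := fun c a => ?_ }, fun x => rfl⟩
    · show ρ (a + b, (0:𝔤₂)) v = ρ (a, (0:𝔤₂)) v + ρ (b, (0:𝔤₂)) v
      have h : (a + b, (0:𝔤₂)) = (a, (0:𝔤₂)) + (b, (0:𝔤₂)) := by simp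
      rw [h, map_add ρ, LinearMap.add_apply]
    · show ρ ((c • a : 𝔤₁), (0:𝔤₂)) v = c • ρ (a, (0:𝔤₂)) v
      have h : ((c • a : 𝔤₁), (0:𝔤₂)) = c • ((a, (0:𝔤₂)) : 𝔤₁ × 𝔤₂) := by simp
      rw [h, map_smul ρ, LinearMap.smul_apply]
  -- annihilation by high-degree elements of 𝔤₂
  have ann₂ : ∀ v : M₁ ⊗[ℂ] M₂, ∃ N₀ : ℤ, ∀ n : ℤ, N₀ ≤ n →
      ∀ y ∈ G₂ n, ρ ((0:𝔤₁), y) v = 0 := by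
    intro v
    let P : Submodule ℂ (M₁ ⊗[ℂ] M₂) :=
      { carrier := {v | ∃ N₀ : ℤ, ∀ n : ℤ, N₀ ≤ n → ∀ y ∈ G₂ n, ρ ((0:𝔤₁), y) v = 0}
        add_mem' := by
          rintro a b ⟨Na, ha⟩ ⟨Nb, hb⟩
          exact ⟨max Na Nb, fun n hn y hy => by
            rw [map_add, ha n (le_trans (le_max_left _ _) hn) y hy,
              hb n (le_trans (le_max_right _ _) hn) y hy, add_zero]⟩
        zero_mem' := ⟨0, fun n _ y _ => map_zero _⟩
        smul_mem' := by
          rintro c a ⟨Na, ha⟩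
          exact ⟨Na, fun n hn y hy => by
            rw [map_smul, ha n hn y hy, smul_zero]⟩ }
    have hPmem : ∀ u : M₁ ⊗[ℂ] M₂, u ∈ P ↔
        ∃ N₀ : ℤ, ∀ n : ℤ, N₀ ≤ n → ∀ y ∈ G₂ n, ρ ((0:𝔤₁), y) u = 0 :=
      fun u => Iff.rfl
    have htop : (⊤ : Submodule ℂ (M₁ ⊗[ℂ] M₂)) ≤ P := by
      rw [← TensorProduct.span_tmul_eq_top ℂ M₁ M₂, Submodule.span_le]
      rintro _ ⟨m, w, rfl⟩
      have hw : ∀ k : ℤ, ∀ w ∈ W₂ k, m ⊗ₜ[ℂ] w ∈ P := by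
        intro k w hwk
        rw [hPmem]
        refine ⟨K₂ - k + 1, fun n hn y hy => ?_⟩
        have hz : ⁅y, w⁆ ∈ W₂ (n + k) := hW₂compat n k y hy w hwk
        rw [hK₂ (n + k) (by omega), Submodule.mem_bot] at hz
        rw [hρ₂, hz, TensorProduct.tmul_zero]
      have hQ : (⊤ : Submodule ℂ M₂) ≤
          { carrier := {w | m ⊗ₜ[ℂ] w ∈ P}
            add_mem' := fun {a b} ha hb => by
              simpa [TensorProduct.tmul_add] using P.add_mem ha hb
            zero_mem' := by simpa [TensorProduct.tmul_zero] using P.zero_mem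
            smul_mem' := fun c a ha => by
              simpa [TensorProduct.tmul_smul] using P.smul_mem c ha } := by
        rw [← hW₂.submodule_iSup_eq_top]
        exact iSup_le fun k => hw k
      exact hQ trivial
    exact (hPmem v).mp (htop trivial)
  -- annihilation by high-degree elements of 𝔤₁
  have ann₁ : ∀ v : M₁ ⊗[ℂ] M₂, ∃ N₀ : ℤ, ∀ n : ℤ, N₀ ≤ n →
      ∀ x ∈ G₁ n, ρ (x, (0:𝔤₂)) v = 0 := by
    intro v
    let P : Submodule ℂ (M₁ ⊗[ℂ] M₂) :=
      { carrier := {v | ∃ N₀ : ℤ, ∀ n : ℤ, N₀ ≤ n → ∀ x ∈ G₁ n, ρ (x, (0:𝔤₂)) v = 0}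
        add_mem' := by
          rintro a b ⟨Na, ha⟩ ⟨Nb, hb⟩
          exact ⟨max Na Nb, fun n hn x hx => by
            rw [map_add, ha n (le_trans (le_max_left _ _) hn) x hx,
              hb n (le_trans (le_max_right _ _) hn) x hx, add_zero]⟩
        zero_mem' := ⟨0, fun n _ x _ => map_zero _⟩
        smul_mem' := by
          rintro c a ⟨Na, ha⟩
          exact ⟨Na, fun n hn x hx => by
            rw [map_smul, ha n hn x hx, smul_zero]⟩ }
    have hPmem : ∀ u : M₁ ⊗[ℂ] M₂, u ∈ P ↔
        ∃ N₀ : ℤ, ∀ n : ℤ, N₀ ≤ n → ∀ x ∈ G₁ n, ρ (x, (0:𝔤₂)) u = 0 :=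
      fun u => Iff.rfl
    have htop : (⊤ : Submodule ℂ (M₁ ⊗[ℂ] M₂)) ≤ P := by
      rw [← TensorProduct.span_tmul_eq_top ℂ M₁ M₂, Submodule.span_le]
      rintro _ ⟨m, w, rfl⟩
      have hm : ∀ k : ℤ, ∀ m ∈ W₁ k, m ⊗ₜ[ℂ] w ∈ P := by
        intro k m hmk
        rw [hPmem]
        refine ⟨K₁ - k + 1, fun n hn x hx => ?_⟩
        have hz : ⁅x, m⁆ ∈ W₁ (n + k) := hW₁compat n k x hx m hmk
        rw [hK₁ (n + k) (by omega), Submodule.mem_bot] at hz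
        rw [hρ₁, hz, TensorProduct.zero_tmul]
      have hQ : (⊤ : Submodule ℂ M₁) ≤
          { carrier := {m | m ⊗ₜ[ℂ] w ∈ P}
            add_mem' := fun {a b} ha hb => by
              simpa [TensorProduct.add_tmul] using P.add_mem ha hb
            zero_mem' := by simpa [TensorProduct.zero_tmul] using P.zero_mem
            smul_mem' := fun c a ha => by
              simpa [TensorProduct.smul_tmul'] using P.smul_mem c ha } := by
        rw [← hW₁.submodule_iSup_eq_top]
        exact iSup_le fun k => hm k
      exact hQ trivial
    exact (hPmem v).mp (htop trivial)
  -- N is stable under each factor acting alone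
  have key₁ : ∀ v ∈ N, ∀ x : 𝔤₁, ρ (x, (0:𝔤₂)) v ∈ N := by
    intro v hv x
    obtain ⟨N₀, h⟩ := ann₂ v
    obtain ⟨y, hy, hxy⟩ := hD₁ x N₀
    obtain ⟨L, hL⟩ := hlin₂ v
    have hannz : ρ ((0:𝔤₁), y) v = 0 := by
      have hker : (⨆ n : ℤ, ⨆ _ : N₀ ≤ n, G₂ n) ≤ LinearMap.ker L := by
        refine iSup_le fun n => iSup_le fun hn z hz => ?_
        rw [LinearMap.mem_ker, hL]
        exact h n hn z hz
      have := hker hy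
      rw [LinearMap.mem_ker, hL] at this
      exact this
    have hmem := hN (x, y) hxy v hv
    rwa [hsplit, hannz, add_zero] at hmem
  have key₂ : ∀ v ∈ N, ∀ y : 𝔤₂, ρ ((0:𝔤₁), y) v ∈ N := by
    intro v hv y
    obtain ⟨N₀, h⟩ := ann₁ v
    obtain ⟨x, hx, hxy⟩ := hD₂ y N₀
    obtain ⟨L, hL⟩ := hlin₁ v
    have hannz : ρ (x, (0:𝔤₂)) v = 0 := by
      have hker : (⨆ n : ℤ, ⨆ _ : N₀ ≤ n, G₁ n) ≤ LinearMap.ker L := by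
        refine iSup_le fun n => iSup_le fun hn z hz => ?_
        rw [LinearMap.mem_ker, hL]
        exact h n hn z hz
      have := hker hx
      rw [LinearMap.mem_ker, hL] at this
      exact this
    have hmem := hN (x, y) hxy v hv
    rwa [hsplit, hannz, zero_add] at hmem
  -- the associative algebra generated by the 𝔤₁-action on M₁
  set T : 𝔤₁ →ₗ⁅ℂ⁆ Module.End ℂ M₁ := LieModule.toEnd ℂ 𝔤₁ M₁ with hT
  set A : Subalgebra ℂ (Module.End ℂ M₁) := Algebra.adjoin ℂ (Set.range T) with hAdef
  have hTA : ∀ x : 𝔤₁, T x ∈ A := fun x =>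
    Algebra.subset_adjoin (Set.mem_range_self x)
  have hrT : ∀ x : 𝔤₁, (T x).rTensor M₂ = ρ (x, (0:𝔤₂)) := by
    intro x
    apply TensorProduct.ext'
    intro m w
    rw [LinearMap.rTensor_tmul, hρ₁]
    rfl
  have hA : ∀ f ∈ A, ∀ v ∈ N, f.rTensor M₂ v ∈ N := by
    intro f hf
    induction hf using Algebra.adjoin_induction with
    | mem x hx =>
      obtain ⟨x, rfl⟩ := hx
      intro v hv
      rw [hrT]
      exact key₁ v hv x
    | algebraMap r =>
      intro v hv
      have h : (algebraMap ℂ (Module.End ℂ M₁) r) = r • (LinearMap.id : M₁ →ₗ[ℂ] M₁) := by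
        ext m; simp [Module.algebraMap_end_apply]
      rw [h, LinearMap.rTensor_smul, LinearMap.smul_apply, LinearMap.rTensor_id,
        LinearMap.id_apply]
      exact N.smul_mem r hv
    | add x y hx hy ihx ihy =>
      intro v hv
      have h : (x + y).rTensor M₂ = x.rTensor M₂ + y.rTensor M₂ := LinearMap.rTensor_add M₂ x y
      rw [h, LinearMap.add_apply]
      exact N.add_mem (ihx v hv) (ihy v hv)
    | mul x y hx hy ihx ihy =>
      intro v hv
      have h : (x * y).rTensor M₂ = (x.rTensor M₂) ∘ₗ (y.rTensor M₂) :=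
        LinearMap.rTensor_comp M₂ x y
      rw [h, LinearMap.comp_apply]
      exact ihx _ (ihy v hv)
    -- basis of M₂ and the coordinate equivalence
  let b := Module.Basis.ofVectorSpace ℂ M₂
  let ε : (M₁ ⊗[ℂ] M₂) ≃ₗ[ℂ] (Module.Basis.ofVectorSpaceIndex ℂ M₂ →₀ M₁) :=
    (TensorProduct.congr (LinearEquiv.refl ℂ M₁) b.repr).trans
      (TensorProduct.finsuppScalarRight ℂ ℂ M₁ (Module.Basis.ofVectorSpaceIndex ℂ M₂))
  have εapp : ∀ (m : M₁) (w : M₂) (i : Module.Basis.ofVectorSpaceIndex ℂ M₂),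
      ε (m ⊗ₜ[ℂ] w) i = b.repr w i • m := by
    intro m w i
    simp [ε, TensorProduct.finsuppScalarRight_apply_tmul_apply]
  have εb : ∀ (m : M₁) (i : Module.Basis.ofVectorSpaceIndex ℂ M₂),
      ε (m ⊗ₜ[ℂ] (b i)) = Finsupp.single i m := by
    intro m i
    ext j
    rw [εapp]
    rcases eq_or_ne i j with rfl | hij
    · simp
    · rw [Finsupp.single_eq_of_ne' hij, Module.Basis.repr_self,
        Finsupp.single_eq_of_ne' hij, zero_smul]
  have εcomm : ∀ (f : Module.End ℂ M₁) (z : M₁ ⊗[ℂ] M₂)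
      (i : Module.Basis.ofVectorSpaceIndex ℂ M₂), ε (f.rTensor M₂ z) i = f (ε z i) := by
    intro f z i
    induction z using TensorProduct.induction_on with
    | zero => simp
    | tmul m w => rw [LinearMap.rTensor_tmul, εapp, εapp, map_smul]
    | add a c iha ihc =>
      rw [map_add, map_add, map_add, Finsupp.add_apply, Finsupp.add_apply,
        map_add, iha, ihc]
  -- a nonzero element of N of minimal support
  obtain ⟨v0, hv0N, hv0⟩ := (Submodule.ne_bot_iff N).mp hbot
  have hC : {n : ℕ | ∃ v ∈ N, v ≠ 0 ∧ (ε v).support.card = n}.Nonempty :=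
    ⟨_, v0, hv0N, hv0, rfl⟩
  obtain ⟨v, hvN, hv, hcard⟩ := Nat.sInf_mem hC
  have hmin : ∀ v' ∈ N, v' ≠ 0 → (ε v).support.card ≤ (ε v').support.card := by
    intro v' h1 h2
    rw [hcard]
    exact Nat.sInf_le ⟨v', h1, h2, rfl⟩
  have hεv : ε v ≠ 0 := fun h => hv (by
    have := congrArg ε.symm h
    simpa using this)
  obtain ⟨i₀, hi₀⟩ := Finsupp.support_nonempty_iff.mpr hεv
  set m₁ : M₁ := ε v i₀ with hm₁def
  have hm₁ : m₁ ≠ 0 := Finsupp.mem_support_iff.mp hi₀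
  -- the key density-type claim
  have claim : ∀ f ∈ A, f m₁ = 0 → ∀ i, f (ε v i) = 0 := by
    intro f hf hfm i
    have hv'N : f.rTensor M₂ v ∈ N := hA f hf v hvN
    have hv'0 : f.rTensor M₂ v = 0 := by
      by_contra h0
      have hsub : (ε (f.rTensor M₂ v)).support ⊂ (ε v).support := by
        rw [Finset.ssubset_iff_of_subset]
        · exact ⟨i₀, hi₀, by
            rw [Finsupp.notMem_support_iff, εcomm, ← hm₁def, hfm]⟩
        · intro j hj
          rw [Finsupp.mem_support_iff] at hj ⊢
          intro hz
          rw [εcomm, hz, map_zero] at hj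
          exact hj rfl
      have := Finset.card_lt_card hsub
      have h2 := hmin _ hv'N h0
      omega
    have := εcomm f v i
    rw [hv'0, map_zero] at this
    simp only [Finsupp.coe_zero, Pi.zero_apply] at this
    exact this.symm
  -- every element of M₁ is reached from m₁
  have hsurj : ∀ m : M₁, ∃ f ∈ A, f m₁ = m := by
    set R1 : LieSubmodule ℂ 𝔤₁ M₁ :=
      { carrier := {m | ∃ f ∈ A, f m₁ = m}
        add_mem' := by
          rintro a c ⟨f, hf, rfl⟩ ⟨g, hg, rfl⟩
          exact ⟨f + g, add_mem hf hg, rfl⟩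
        zero_mem' := ⟨0, zero_mem A, rfl⟩
        smul_mem' := by
          rintro t a ⟨f, hf, rfl⟩
          exact ⟨t • f, A.smul_mem hf t, rfl⟩
        lie_mem := by
          rintro x m ⟨f, hf, rfl⟩
          exact ⟨T x * f, mul_mem (hTA x) hf, rfl⟩ } with hR1def
    have hm₁R : m₁ ∈ R1 := ⟨1, one_mem A, rfl⟩
    rcases hM₁simple.eq_bot_or_eq_top R1 with h | h
    · rw [h] at hm₁R
      exact absurd ((LieSubmodule.mem_bot _).mp hm₁R) hm₁
    · intro m
      have : m ∈ R1 := h ▸ LieSubmodule.mem_top m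
      exact this
  -- well-definedness
  have wd : ∀ i, ∀ f ∈ A, ∀ g ∈ A, f m₁ = g m₁ → f (ε v i) = g (ε v i) := by
    intro i f hf g hg hfg
    have := claim (f - g) (sub_mem hf hg)
      (by rw [LinearMap.sub_apply, hfg, sub_self]) i
    rw [LinearMap.sub_apply, sub_eq_zero] at this
    exact this
  choose F hFA hF using hsurj
  -- each coordinate of v is a scalar multiple of m₁
  have hc : ∀ i, ∃ c : ℂ, ε v i = c • m₁ := by
    intro i
    set φ : M₁ →ₗ[ℂ] M₁ :=
      { toFun := fun m => F m (ε v i)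
        map_add' := fun m m' => by
          have := wd i (F (m + m')) (hFA _) (F m + F m')
            (add_mem (hFA m) (hFA m')) (by rw [hF, LinearMap.add_apply, hF, hF])
          simpa using this
        map_smul' := fun t m => by
          have := wd i (F (t • m)) (hFA _) (t • F m)
            (A.smul_mem (hFA m) t) (by rw [hF, LinearMap.smul_apply, hF])
          simpa using this } with hφdef
    have hφ : ∀ (x : 𝔤₁) (m : M₁), φ ⁅x, m⁆ = ⁅x, φ m⁆ := by
      intro x m
      have h1 : (T x * F m) m₁ = ⁅x, m⁆ := by
        rw [Module.End.mul_apply, hF]; rfl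
      have := wd i (F ⁅x, m⁆) (hFA _) (T x * F m)
        (mul_mem (hTA x) (hFA m)) (by rw [hF, h1])
      simp only [Module.End.mul_apply] at this
      exact this
    obtain ⟨c, hcs⟩ := hSchur₁ φ hφ
    refine ⟨c, ?_⟩
    have h1 : φ m₁ = ε v i := by
      have := wd i (F m₁) (hFA _) 1 (one_mem A) (by rw [hF, Module.End.one_apply])
      simp only [Module.End.one_apply] at this
      exact this
    rw [← h1, hcs m₁]
  choose c hcspec using hc
  -- v is a pure tensor
  set w₀ : M₂ := ∑ i ∈ (ε v).support, c i • b i with hw₀def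
  have hvw : v = m₁ ⊗ₜ[ℂ] w₀ := by
    apply ε.injective
    rw [hw₀def, TensorProduct.tmul_sum]
    rw [map_sum]
    have hterm : ∀ i ∈ (ε v).support,
        ε (m₁ ⊗ₜ[ℂ] (c i • b i)) = Finsupp.single i (ε v i) := by
      intro i _
      rw [TensorProduct.tmul_smul, map_smul, εb, Finsupp.smul_single, ← hcspec]
    rw [Finset.sum_congr rfl hterm]
    exact (Finsupp.sum_single (ε v)).symm
  have hw₀ : w₀ ≠ 0 := by
    intro h
    rw [h, TensorProduct.tmul_zero] at hvw
    exact hv hvw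
  have hpure : m₁ ⊗ₜ[ℂ] w₀ ∈ N := hvw ▸ hvN
  -- all of M₁ ⊗ w₀ is in N
  have allm : ∀ m : M₁, m ⊗ₜ[ℂ] w₀ ∈ N := by
    set R1 : LieSubmodule ℂ 𝔤₁ M₁ :=
      { carrier := {m | m ⊗ₜ[ℂ] w₀ ∈ N}
        add_mem' := fun {a b} ha hb => by
          simpa [TensorProduct.add_tmul] using N.add_mem ha hb
        zero_mem' := by simpa [TensorProduct.zero_tmul] using N.zero_mem
        smul_mem' := fun t a ha => by
          simpa [TensorProduct.smul_tmul'] using N.smul_mem t ha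
        lie_mem := by
          intro x m hm
          have := key₁ _ hm x
          rwa [hρ₁] at this } with hR1def
    have hmem : m₁ ∈ R1 := hpure
    rcases hM₁simple.eq_bot_or_eq_top R1 with h | h
    · rw [h] at hmem
      exact absurd ((LieSubmodule.mem_bot _).mp hmem) hm₁
    · intro m
      have : m ∈ R1 := h ▸ LieSubmodule.mem_top m
      exact this
  -- all pure tensors are in N
  have allw : ∀ (w : M₂) (m : M₁), m ⊗ₜ[ℂ] w ∈ N := by
    set R2 : LieSubmodule ℂ 𝔤₂ M₂ :=
      { carrier := {w | ∀ m : M₁, m ⊗ₜ[ℂ] w ∈ N}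
        add_mem' := fun {a b} ha hb m => by
          simpa [TensorProduct.tmul_add] using N.add_mem (ha m) (hb m)
        zero_mem' := fun m => by simpa [TensorProduct.tmul_zero] using N.zero_mem
        smul_mem' := fun t a ha m => by
          simpa [TensorProduct.tmul_smul] using N.smul_mem t (ha m)
        lie_mem := by
          intro y w hw m
          have := key₂ _ (hw m) y
          rwa [hρ₂] at this } with hR2def
    have hmem : w₀ ∈ R2 := allm
    rcases hM₂simple.eq_bot_or_eq_top R2 with h | h
    · rw [h] at hmem
      exact absurd ((LieSubmodule.mem_bot _).mp hmem) hw₀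
    · intro w
      have : w ∈ R2 := h ▸ LieSubmodule.mem_top w
      exact this
  rw [eq_top_iff, ← TensorProduct.span_tmul_eq_top ℂ M₁ M₂, Submodule.span_le]
  rintro _ ⟨m, w, rfl⟩
  exact allw w m
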